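/- Let 0 < R₁ < R₂, α₁, α₂ ∈ ℝ, and θ_j = α_j R_j². Define f : (0,∞) → ℝ piecewise by f(r) = a on (0,R₁), f(r) = b + c/r on (R₁,R₂), and f(r) = d + e/r on (R₂,∞), where a ∈ ℝ, c = −θ₁a, b = a + (θ₁/R₁)a, e = c − θ₂(b + c/R₂), and d = b + c/R₂ − e/R₂. Then f is continuous at R₁ and R₂, satisfies the jump conditions f'(R₁+) − f'(R₁−) = α₁ f(R₁) and f'(R₂+) − f'(R₂−) = α₂ f(R₂), and d = (C₀/(R₁²R₂²))·a, where C₀ = R₁²R₂² + R₁R₂²θ₁ + R₁²R₂θ₂ + θ₁θ₂R₁(R₂−R₁). -/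

import Mathlib

private lemma aux_hasDerivAt (p q x : ℝ) (hx : x ≠ 0) :
    HasDerivAt (fun r : ℝ => p + q / r) (-(q / x ^ 2)) x := by
  have h := ((hasDerivAt_inv hx).const_mul q).const_add p
  have : q * -(x ^ 2)⁻¹ = -(q / x ^ 2) := by field_simp
  rw [this] at h
  simpa [div_eq_mul_inv] using h

theorem zero_energy_radial_solution (R1 R2 α1 α2 a : ℝ)
    (hR1 : 0 < R1) (hR12 : R1 < R2) :
    let θ1 : ℝ := α1 * R1 ^ 2
    let θ2 : ℝ := α2 * R2 ^ 2
    let c : ℝ := -θ1 * a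
    let b : ℝ := a + (θ1 / R1) * a
    let e : ℝ := c - θ2 * (b + c / R2)
    let d : ℝ := b + c / R2 - e / R2
    let f : ℝ → ℝ := fun r =>
      if r < R1 then a else if r < R2 then b + c / r else d + e / r
    let C0 : ℝ := R1 ^ 2 * R2 ^ 2 + R1 * R2 ^ 2 * θ1 + R1 ^ 2 * R2 * θ2
      + θ1 * θ2 * R1 * (R2 - R1)
    ContinuousAt f R1 ∧ ContinuousAt f R2 ∧
    derivWithin f (Set.Ioi R1) R1 - derivWithin f (Set.Iio R1) R1 = α1 * f R1 ∧
    derivWithin f (Set.Ioi R2) R2 - derivWithin f (Set.Iio R2) R2 = α2 * f R2 ∧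
    d = (C0 / (R1 ^ 2 * R2 ^ 2)) * a := by
  intro θ1 θ2 c b e d f C0
  have hR1' : R1 ≠ 0 := ne_of_gt hR1
  have hR2 : 0 < R2 := hR1.trans hR12
  have hR2' : R2 ≠ 0 := ne_of_gt hR2
  have hkey1 : b + c / R1 = a := by
    show a + (θ1 / R1) * a + (-θ1 * a) / R1 = a
    field_simp
    ring
  have hkey2 : d + e / R2 = b + c / R2 := by
    show b + c / R2 - e / R2 + e / R2 = b + c / R2
    ring
  have hfR1 : f R1 = a := by
    show (if R1 < R1 then a else if R1 < R2 then b + c / R1 else d + e / R1) = a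
    rw [if_neg (lt_irrefl R1), if_pos hR12]; exact hkey1
  have hfR2 : f R2 = b + c / R2 := by
    show (if R2 < R1 then a else if R2 < R2 then b + c / R2 else d + e / R2)
        = b + c / R2
    rw [if_neg (not_lt.2 hR12.le), if_neg (lt_irrefl R2)]; exact hkey2
  have hfmid : ∀ r, R1 ≤ r → r < R2 → f r = b + c / r := by
    intro r h1 h2
    show (if r < R1 then a else if r < R2 then b + c / r else d + e / r) = _
    rw [if_neg (not_lt.2 h1), if_pos h2]
  have hflo : ∀ r, r < R1 → f r = a := by
    intro r h1
    show (if r < R1 then a else if r < R2 then b + c / r else d + e / r) = _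
    rw [if_pos h1]
  have hfhi : ∀ r, R2 ≤ r → f r = d + e / r := by
    intro r h2
    show (if r < R1 then a else if r < R2 then b + c / r else d + e / r) = _
    rw [if_neg (not_lt.2 ((le_of_lt hR12).trans h2)), if_neg (not_lt.2 h2)]
  -- continuity at R1
  have hcont1 : ContinuousAt f R1 := by
    have hle : ContinuousWithinAt f (Set.Iic R1) R1 := by
      refine (continuousWithinAt_const : ContinuousWithinAt (fun _ : ℝ => a) (Set.Iic R1) R1).congr
        (fun (y : ℝ) (hy : y ∈ Set.Iic R1) => ?_) hfR1
      rcases lt_or_eq_of_le (Set.mem_Iic.mp hy) with h | h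
      · exact hflo y h
      · rw [h]; exact hfR1
    have hge : ContinuousWithinAt f (Set.Ici R1) R1 := by
      have hg : ContinuousAt (fun r : ℝ => b + c / r) R1 :=
        continuousAt_const.add (continuousAt_const.div continuousAt_id hR1')
      refine hg.continuousWithinAt.congr_of_eventuallyEq ?_
        (hfR1.trans hkey1.symm)
      filter_upwards [Ico_mem_nhdsGE_of_mem ⟨le_refl R1, hR12⟩] with r hr
      exact hfmid r hr.1 hr.2
    rw [← continuousWithinAt_univ, ← Set.Iic_union_Ici]
    exact hle.union hge
  -- continuity at R2
  have hcont2 : ContinuousAt f R2 := by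
    have hle : ContinuousWithinAt f (Set.Iic R2) R2 := by
      have hg : ContinuousAt (fun r : ℝ => b + c / r) R2 :=
        continuousAt_const.add (continuousAt_const.div continuousAt_id hR2')
      refine hg.continuousWithinAt.congr_of_eventuallyEq ?_ hfR2
      filter_upwards [Ioc_mem_nhdsLE_of_mem ⟨hR12, le_refl R2⟩] with r hr
      rcases lt_or_eq_of_le hr.2 with h | h
      · exact hfmid r hr.1.le h
      · rw [h]; exact hfR2
    have hge : ContinuousWithinAt f (Set.Ici R2) R2 := by
      have hg : ContinuousAt (fun r : ℝ => d + e / r) R2 :=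
        continuousAt_const.add (continuousAt_const.div continuousAt_id hR2')
      exact hg.continuousWithinAt.congr (fun y hy => hfhi y hy)
        (hfR2.trans hkey2.symm)
    rw [← continuousWithinAt_univ, ← Set.Iic_union_Ici]
    exact hle.union hge
  -- one-sided derivatives
  have hdIoi1 : derivWithin f (Set.Ioi R1) R1 = -(c / R1 ^ 2) := by
    have hg := (aux_hasDerivAt b c R1 hR1').hasDerivWithinAt (s := Set.Ioi R1)
    have hev : f =ᶠ[nhdsWithin R1 (Set.Ioi R1)] fun r => b + c / r := by
      filter_upwards [Ioo_mem_nhdsGT_of_mem ⟨le_refl R1, hR12⟩] with r hr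
      exact hfmid r hr.1.le hr.2
    exact (hg.congr_of_eventuallyEq hev (hfR1.trans hkey1.symm)).derivWithin
      (uniqueDiffWithinAt_Ioi R1)
  have hdIio1 : derivWithin f (Set.Iio R1) R1 = 0 := by
    have hg := (hasDerivAt_const R1 a).hasDerivWithinAt (s := Set.Iio R1)
    exact (hg.congr (fun y hy => hflo y hy) hfR1).derivWithin
      (uniqueDiffWithinAt_Iio R1)
  have hdIoi2 : derivWithin f (Set.Ioi R2) R2 = -(e / R2 ^ 2) := by
    have hg := (aux_hasDerivAt d e R2 hR2').hasDerivWithinAt (s := Set.Ioi R2)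
    exact (hg.congr (fun y hy => hfhi y (le_of_lt hy)) (hfR2.trans hkey2.symm)).derivWithin
      (uniqueDiffWithinAt_Ioi R2)
  have hdIio2 : derivWithin f (Set.Iio R2) R2 = -(c / R2 ^ 2) := by
    have hg := (aux_hasDerivAt b c R2 hR2').hasDerivWithinAt (s := Set.Iio R2)
    have hev : f =ᶠ[nhdsWithin R2 (Set.Iio R2)] fun r => b + c / r := by
      filter_upwards [Ioo_mem_nhdsLT_of_mem ⟨hR12, le_refl R2⟩] with r hr
      exact hfmid r hr.1.le hr.2
    exact (hg.congr_of_eventuallyEq hev hfR2).derivWithin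
      (uniqueDiffWithinAt_Iio R2)
  refine ⟨hcont1, hcont2, ?_, ?_, ?_⟩
  · rw [hdIoi1, hdIio1, hfR1]
    show -((-θ1 * a) / R1 ^ 2) - 0 = α1 * a
    show -((-(α1 * R1 ^ 2) * a) / R1 ^ 2) - 0 = α1 * a
    field_simp
    ring
  · rw [hdIoi2, hdIio2, hfR2]
    show -(e / R2 ^ 2) - -(c / R2 ^ 2) = α2 * (b + c / R2)
    have he : e = c - α2 * R2 ^ 2 * (b + c / R2) := rfl
    rw [he]
    field_simp
    ring
  · show b + c / R2 - e / R2 = (C0 / (R1 ^ 2 * R2 ^ 2)) * a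
    have hb : b = a + (α1 * R1 ^ 2 / R1) * a := rfl
    have hc : c = -(α1 * R1 ^ 2) * a := rfl
    have he : e = c - α2 * R2 ^ 2 * (b + c / R2) := rfl
    have hC0 : C0 = R1 ^ 2 * R2 ^ 2 + R1 * R2 ^ 2 * (α1 * R1 ^ 2)
        + R1 ^ 2 * R2 * (α2 * R2 ^ 2)
        + (α1 * R1 ^ 2) * (α2 * R2 ^ 2) * R1 * (R2 - R1) := rfl
    rw [he, hb, hc, hC0]
    field_simp
    ring
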